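/- For every k ∈ ℕ and m ∈ ℕ₀, the even moment e_{k,2m} = ∫₀¹ 2(sin(kπt))² t^{2m} dt equals 1/(2m+1) + Σ_{n=1}^{m} (−1)ⁿ (2m)! / ((2(m−n)+1)! · 2^{2n}) · 1/(k^{2n} π^{2n}). -/

import Mathlib

open Real MeasureTheory intervalIntegral Finset

/-- For `k ∈ ℕ` (k ≥ 1) and `n ∈ ℕ₀`, the moment `e_{k,n} = ∫₀¹ 2 (sin(kπt))² tⁿ dt`. -/
noncomputable def bridgeMoment (k n : ℕ) : ℝ :=
  ∫ t in (0:ℝ)..1, 2 * (Real.sin (k * Real.pi * t))^2 * t^n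

lemma ibp_cos (b : ℝ) (hb : b ≠ 0) (n : ℕ) :
    (∫ t in (0:ℝ)..1, t^(n+1) * Real.cos (b*t)) =
      Real.sin b / b - ((n+1:ℝ)/b) * ∫ t in (0:ℝ)..1, t^n * Real.sin (b*t) := by
  have h := intervalIntegral.integral_mul_deriv_eq_deriv_mul
    (a := (0:ℝ)) (b := 1)
    (u := fun t => t^(n+1)) (u' := fun t => ((n:ℝ)+1)*t^n)
    (v := fun t => Real.sin (b*t)/b) (v' := fun t => Real.cos (b*t))
    (fun x _ => by simpa using hasDerivAt_pow (n+1) x)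
    (fun x _ => by
      have hbt : HasDerivAt (fun t : ℝ => b * t) b x := by
        simpa using (hasDerivAt_id x).const_mul b
      have := ((Real.hasDerivAt_sin (b*x)).comp x hbt).div_const b
      simpa [mul_div_assoc, hb] using this)
    (Continuous.intervalIntegrable (by continuity) _ _)
    (Continuous.intervalIntegrable (by continuity) _ _)
  rw [h]
  have : (∫ t in (0:ℝ)..1, ((n:ℝ)+1)*t^n * (Real.sin (b*t)/b))
      = ∫ t in (0:ℝ)..1, (((n:ℝ)+1)/b) * (t^n * Real.sin (b*t)) := by
    congr 1; funext t; ring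
  rw [this, intervalIntegral.integral_const_mul]
  simp

lemma ibp_sin (b : ℝ) (hb : b ≠ 0) (n : ℕ) :
    (∫ t in (0:ℝ)..1, t^(n+1) * Real.sin (b*t)) =
      -Real.cos b / b + ((n+1:ℝ)/b) * ∫ t in (0:ℝ)..1, t^n * Real.cos (b*t) := by
  have h := intervalIntegral.integral_mul_deriv_eq_deriv_mul
    (a := (0:ℝ)) (b := 1)
    (u := fun t => t^(n+1)) (u' := fun t => ((n:ℝ)+1)*t^n)
    (v := fun t => -Real.cos (b*t)/b) (v' := fun t => Real.sin (b*t))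
    (fun x _ => by simpa using hasDerivAt_pow (n+1) x)
    (fun x _ => by
      have hbt : HasDerivAt (fun t : ℝ => b * t) b x := by
        simpa using (hasDerivAt_id x).const_mul b
      have h3 := (((Real.hasDerivAt_cos (b*x)).comp x hbt).div_const b).neg
      simp only [Function.comp] at h3
      have : -(-Real.sin (b*x) * b / b) = Real.sin (b*x) := by field_simp
      rw [this] at h3
      have h4 : (-fun x => Real.cos (b*x)/b) = fun t => -Real.cos (b*t)/b := by
        funext t; simp [neg_div]
      rw [h4] at h3
      exact h3)
    (Continuous.intervalIntegrable (by continuity) _ _)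
    (Continuous.intervalIntegrable (by continuity) _ _)
  rw [h]
  have : (∫ t in (0:ℝ)..1, ((n:ℝ)+1)*t^n * (-Real.cos (b*t)/b))
      = ∫ t in (0:ℝ)..1, (-(((n:ℝ)+1)/b)) * (t^n * Real.cos (b*t)) := by
    congr 1; funext t; ring
  rw [this, intervalIntegral.integral_const_mul]
  simp

lemma I_zero (b : ℝ) (hb : b ≠ 0) (hs : Real.sin b = 0) :
    (∫ t in (0:ℝ)..1, Real.cos (b*t)) = 0 := by
  rw [intervalIntegral.integral_comp_mul_left (fun x => Real.cos x) hb]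
  simp [hs]

lemma I_rec (b : ℝ) (hb : b ≠ 0) (hs : Real.sin b = 0) (hc : Real.cos b = 1) (n : ℕ) :
    (∫ t in (0:ℝ)..1, t^(n+2) * Real.cos (b*t)) =
      ((n:ℝ)+2)/b^2 - ((n:ℝ)+2)*((n:ℝ)+1)/b^2 * ∫ t in (0:ℝ)..1, t^n * Real.cos (b*t) := by
  have h1 := ibp_cos b hb (n+1)
  have h2 := ibp_sin b hb n
  rw [h2] at h1
  rw [h1, hs, hc]
  push_cast
  field_simp
  ring

lemma I_formula (b : ℝ) (hb : b ≠ 0) (hs : Real.sin b = 0) (hc : Real.cos b = 1) (m : ℕ) :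
    (∫ t in (0:ℝ)..1, t^(2*m) * Real.cos (b*t)) =
      ∑ j ∈ Finset.range m,
        (-1:ℝ)^j * (Nat.factorial (2*m)) / (Nat.factorial (2*(m-1-j)+1)) / b^(2*j+2) := by
  induction m with
  | zero => simpa using I_zero b hb hs
  | succ m ih =>
    have key : (∫ t in (0:ℝ)..1, t^(2*(m+1)) * Real.cos (b*t)) =
        (((2*m : ℕ):ℝ)+2)/b^2 - (((2*m : ℕ):ℝ)+2)*(((2*m : ℕ):ℝ)+1)/b^2 *
          ∫ t in (0:ℝ)..1, t^(2*m) * Real.cos (b*t) := by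
      rw [show 2*(m+1) = (2*m)+2 from by ring]
      exact I_rec b hb hs hc (2*m)
    rw [key, ih, Finset.sum_range_succ', Finset.mul_sum]
    have hfac : (Nat.factorial (2*(m+1)) : ℝ)
        = (((2*m : ℕ):ℝ)+2) * (((2*m : ℕ):ℝ)+1) * (Nat.factorial (2*m)) := by
      have : 2*(m+1) = (2*m+1)+1 := by ring
      rw [this, Nat.factorial_succ, Nat.factorial_succ]
      push_cast; ring
    have hb2 : b^2 ≠ 0 := pow_ne_zero _ hb
    have hterm : ∀ j ∈ Finset.range m,
        (-1:ℝ)^(j+1) * (Nat.factorial (2*(m+1))) / (Nat.factorial (2*((m+1)-1-(j+1))+1)) / b^(2*(j+1)+2)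
        = -((((2*m : ℕ):ℝ)+2)*(((2*m : ℕ):ℝ)+1)/b^2 *
            ((-1:ℝ)^j * (Nat.factorial (2*m)) / (Nat.factorial (2*(m-1-j)+1)) / b^(2*j+2))) := by
      intro j hj
      have he : (m+1)-1-(j+1) = m-1-j := by omega
      have hp : b^(2*(j+1)+2) = b^(2*j+2) * b^2 := by
        rw [← pow_add]; ring_nf
      rw [he, hfac, hp]
      have hbp : b^(2*j+2) ≠ 0 := pow_ne_zero _ hb
      have hf1 : ((Nat.factorial (2*(m-1-j)+1)) : ℝ) ≠ 0 :=
        Nat.cast_ne_zero.2 (Nat.factorial_ne_zero _)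
      field_simp
      ring
    have h0 : (-1:ℝ)^0 * (Nat.factorial (2*(m+1))) / (Nat.factorial (2*((m+1)-1-0)+1)) / b^(2*0+2)
        = (((2*m : ℕ):ℝ)+2)/b^2 := by
      have he : (m+1)-1-0 = m := by omega
      rw [he, hfac]
      have hfac1 : ((Nat.factorial (2*m+1)) : ℝ) = (((2*m : ℕ):ℝ)+1) * (Nat.factorial (2*m)) := by
        rw [Nat.factorial_succ]; push_cast; ring
      rw [hfac1]
      have hf1 : ((Nat.factorial (2*m)) : ℝ) ≠ 0 :=
        Nat.cast_ne_zero.2 (Nat.factorial_ne_zero _)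
      have hf2 : (((2*m : ℕ):ℝ)+1) ≠ 0 := by positivity
      field_simp
    rw [Finset.sum_congr rfl hterm, h0, Finset.sum_neg_distrib]
    ring

lemma sum_Icc_one (f : ℕ → ℝ) (m : ℕ) :
    ∑ n ∈ Finset.Icc 1 m, f n = ∑ j ∈ Finset.range m, f (j+1) := by
  induction m with
  | zero => simp
  | succ m ih =>
    rw [Finset.sum_Icc_succ_top (by omega), ih, Finset.sum_range_succ]

theorem even_moment_formula (k : ℕ) (hk : 1 ≤ k) (m : ℕ) :
    bridgeMoment k (2 * m) = 1 / (2 * (m : ℝ) + 1) +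
      ∑ n ∈ Finset.Icc 1 m,
        (-1 : ℝ)^n * (Nat.factorial (2 * m)) /
          ((Nat.factorial (2 * (m - n) + 1)) * 2^(2 * n)) *
            (1 / ((k : ℝ)^(2 * n) * Real.pi^(2 * n))) := by
  set b : ℝ := 2 * k * Real.pi with hbdef
  have hk0 : (k:ℝ) ≠ 0 := Nat.cast_ne_zero.2 (by omega)
  have hb : b ≠ 0 := by
    simp only [hbdef]
    positivity
  have hs : Real.sin b = 0 := by
    have : b = ((2*k : ℕ) : ℝ) * Real.pi := by push_cast [hbdef]; ring
    rw [this]; exact Real.sin_nat_mul_pi (2*k)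
  have hc : Real.cos b = 1 := by
    have : b = (k : ℝ) * (2 * Real.pi) := by rw [hbdef]; ring
    rw [this]; exact Real.cos_nat_mul_two_pi k
  have hint : bridgeMoment k (2*m) =
      (∫ t in (0:ℝ)..1, t^(2*m)) - ∫ t in (0:ℝ)..1, t^(2*m) * Real.cos (b*t) := by
    rw [bridgeMoment, ← intervalIntegral.integral_sub
      (Continuous.intervalIntegrable (by continuity) _ _)
      (Continuous.intervalIntegrable (by continuity) _ _)]
    congr 1; funext t
    have h4 := Real.sin_sq_eq_half_sub (k * Real.pi * t)
    rw [h4, hbdef]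
    ring_nf
  rw [hint, integral_pow, I_formula b hb hs hc m, sum_Icc_one]
  have hterm : ∀ j ∈ Finset.range m,
      (-1 : ℝ)^(j+1) * (Nat.factorial (2 * m)) /
          ((Nat.factorial (2 * (m - (j+1)) + 1)) * 2^(2 * (j+1))) *
            (1 / ((k : ℝ)^(2 * (j+1)) * Real.pi^(2 * (j+1))))
      = -((-1:ℝ)^j * (Nat.factorial (2*m)) / (Nat.factorial (2*(m-1-j)+1)) / b^(2*j+2)) := by
    intro j hj
    have he : m - (j+1) = m-1-j := by omega
    have hbp : b^(2*j+2) = 2^(2*j+2) * (k:ℝ)^(2*j+2) * Real.pi^(2*j+2) := by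
      rw [hbdef, mul_pow, mul_pow]
    have he2 : 2*(j+1) = 2*j+2 := by ring
    rw [he, he2, hbp]
    have hf1 : ((Nat.factorial (2*(m-1-j)+1)) : ℝ) ≠ 0 :=
      Nat.cast_ne_zero.2 (Nat.factorial_ne_zero _)
    have hpi : Real.pi ≠ 0 := Real.pi_ne_zero
    field_simp
    ring
  rw [Finset.sum_congr rfl hterm, Finset.sum_neg_distrib]
  push_cast
  ring
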